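/- Let m and k be positive integers, ζ_m := e^{2πi/m}, and let z ∈ ℂ with z ≠ 0 and |2 − z^m − z^{-m}| < 1 (so in particular z^m + z^{-m} ≠ 1). Then the series U_k(−z, ζ_m) = ∑_{n=0}^∞ ζ_m^{k(n+1)} (zζ_m; ζ_m)_n (z⁻¹ζ_m; ζ_m)_n converges and is given by the finite formula U_k(−z, ζ_m) = (−1/(1 − z^m − z^{-m})) · ∑_{n=0}^{m-1} ζ_m^{k(n+1)} (zζ_m; ζ_m)_n (z⁻¹ζ_m; ζ_m)_n. -/

import Mathlib

set_option maxHeartbeats 1000000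

/-- The finite q-Pochhammer symbol `(z;q)_n = ∏_{i=0}^{n-1} (1 - z q^i)`. -/
noncomputable def qPoch (z q : ℂ) (n : ℕ) : ℂ := ∏ i ∈ Finset.range n, (1 - z * q ^ i)

lemma prod_one_sub_zeta {m : ℕ} (hm : 0 < m) {ζ : ℂ} (h : IsPrimitiveRoot ζ m)
    {x : ℂ} (hx : x ≠ 0) :
    ∏ i ∈ Finset.range m, (1 - x * ζ ^ i) = 1 - x ^ m := by
  have hpoly := X_pow_sub_C_eq_prod h hm (α := (1:ℂ)) (a := 1) (one_pow m)
  have h2 := congrArg (Polynomial.eval x⁻¹) hpoly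
  simp only [Polynomial.eval_sub, Polynomial.eval_pow, Polynomial.eval_X, Polynomial.eval_C,
    Polynomial.eval_prod, mul_one] at h2
  have hxm : x ^ m ≠ 0 := pow_ne_zero _ hx
  have key : ∏ i ∈ Finset.range m, (1 - x * ζ ^ i)
      = x ^ m * ∏ i ∈ Finset.range m, (x⁻¹ - ζ ^ i) := by
    have h4 : x ^ m * ∏ i ∈ Finset.range m, (x⁻¹ - ζ ^ i)
        = ∏ i ∈ Finset.range m, (x * (x⁻¹ - ζ ^ i)) := by
      rw [Finset.prod_mul_distrib, Finset.prod_const, Finset.card_range]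
    rw [h4]
    refine Finset.prod_congr rfl fun i _ => ?_
    field_simp
  rw [key, ← h2, mul_sub, mul_one, ← mul_pow, mul_inv_cancel₀ hx, one_pow]

lemma qPoch_add {m : ℕ} (hm : 0 < m) {ζ : ℂ} (h : IsPrimitiveRoot ζ m)
    {w : ℂ} (hw : w ≠ 0) (n : ℕ) :
    qPoch w ζ (n + m) = qPoch w ζ n * (1 - w ^ m) := by
  have hζ0 : ζ ≠ 0 := h.ne_zero hm.ne'
  unfold qPoch
  rw [Finset.prod_range_add]
  congr 1
  have : ∀ i, 1 - w * ζ ^ (n + i) = 1 - (w * ζ ^ n) * ζ ^ i := by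
    intro i; rw [pow_add]; ring
  simp only [this]
  rw [prod_one_sub_zeta hm h (mul_ne_zero hw (pow_ne_zero _ hζ0)),
    mul_pow, ← pow_mul, mul_comm n m, pow_mul, h.pow_eq_one, one_pow, mul_one]

theorem strongU_finite_formula_at_root_of_unity (m k : ℕ) (hm : 0 < m) (hk : 0 < k)
    (ζ : ℂ) (hζ : ζ = Complex.exp (2 * Real.pi * Complex.I / m))
    (z : ℂ) (hz0 : z ≠ 0)
    (hlt : ‖2 - z ^ m - z⁻¹ ^ m‖ < 1) :
    Summable (fun n : ℕ =>
      ζ ^ (k * (n + 1)) * qPoch (z * ζ) ζ n * qPoch (z⁻¹ * ζ) ζ n) ∧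
    (∑' n : ℕ, ζ ^ (k * (n + 1)) * qPoch (z * ζ) ζ n * qPoch (z⁻¹ * ζ) ζ n)
      = (-(1 - z ^ m - z⁻¹ ^ m)⁻¹) *
          ∑ n ∈ Finset.range m, ζ ^ (k * (n + 1)) * qPoch (z * ζ) ζ n * qPoch (z⁻¹ * ζ) ζ n := by
  haveI : NeZero m := ⟨hm.ne'⟩
  have hprim : IsPrimitiveRoot ζ m := hζ ▸ Complex.isPrimitiveRoot_exp m hm.ne'
  have hζ0 : ζ ≠ 0 := hprim.ne_zero hm.ne'
  set a : ℕ → ℂ := fun n => ζ ^ (k * (n + 1)) * qPoch (z * ζ) ζ n * qPoch (z⁻¹ * ζ) ζ n with ha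
  set c : ℂ := 2 - z ^ m - z⁻¹ ^ m with hc
  have hzm : z ^ m ≠ 0 := pow_ne_zero _ hz0
  have hcprod : c = (1 - (z * ζ) ^ m) * (1 - (z⁻¹ * ζ) ^ m) := by
    rw [mul_pow, mul_pow, hprim.pow_eq_one, mul_one, mul_one, hc]
    have : z⁻¹ ^ m = (z ^ m)⁻¹ := by rw [inv_pow]
    rw [this]
    field_simp
    ring
  -- periodicity
  have hper : ∀ n, a (n + m) = c * a n := by
    intro n
    have h1 := qPoch_add hm hprim (mul_ne_zero hz0 hζ0) n
    have h2 := qPoch_add hm hprim (mul_ne_zero (inv_ne_zero hz0) hζ0) n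
    have h3 : ζ ^ (k * (n + m + 1)) = ζ ^ (k * (n + 1)) := by
      have : k * (n + m + 1) = k * (n + 1) + m * k := by ring
      rw [this, pow_add, pow_mul ζ m k, hprim.pow_eq_one, one_pow, mul_one]
    simp only [ha, h1, h2, h3, hcprod]
    ring
  have hrep : ∀ q r : ℕ, a (q * m + r) = c ^ q * a r := by
    intro q
    induction q with
    | zero => intro r; simp
    | succ q ih =>
      intro r
      have : (q + 1) * m + r = (q * m + r) + m := by ring
      rw [this, hper, ih, pow_succ]
      ring
  have hnc : ‖c‖ < 1 := hlt
  -- the product-type function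
  have hsf : Summable fun q : ℕ => ‖c ^ q‖ := by
    simpa using summable_norm_geometric_of_norm_lt_one hnc
  have hsg : Summable fun r : Fin m => ‖a r‖ := Summable.of_finite
  have hsum2 : Summable fun p : ℕ × Fin m => c ^ p.1 * a p.2 :=
    summable_mul_of_summable_norm (f := fun q : ℕ => c ^ q) (g := fun r : Fin m => a r) hsf hsg
  have hcomp : (fun p : ℕ × Fin m => c ^ p.1 * a p.2)
      = a ∘ (Nat.divModEquiv m).symm := by
    funext p
    simp [Nat.divModEquiv, hrep p.1 p.2]
  have hsa : Summable a := by
    rw [← (Nat.divModEquiv m).symm.summable_iff, ← hcomp]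
    exact hsum2
  refine ⟨hsa, ?_⟩
  have htsum : ∑' n, a n = ∑' p : ℕ × Fin m, c ^ p.1 * a p.2 := by
    rw [hcomp]
    exact ((Nat.divModEquiv m).symm.tsum_eq a).symm
  have hmul : (∑' q : ℕ, c ^ q) * (∑' r : Fin m, a r)
      = ∑' p : ℕ × Fin m, c ^ p.1 * a p.2 :=
    tsum_mul_tsum_of_summable_norm (f := fun q : ℕ => c ^ q) (g := fun r : Fin m => a r) hsf hsg
  have hgeo : (∑' q : ℕ, c ^ q) = (1 - c)⁻¹ := tsum_geometric_of_norm_lt_one hnc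
  have hfin : (∑' r : Fin m, a r) = ∑ n ∈ Finset.range m, a n := by
    rw [tsum_fintype]
    exact Fin.sum_univ_eq_sum_range a m
  have hinv : (1 - c)⁻¹ = -(1 - z ^ m - z⁻¹ ^ m)⁻¹ := by
    have : (1 : ℂ) - c = -(1 - z ^ m - z⁻¹ ^ m) := by rw [hc]; ring
    rw [this, inv_neg]
  calc ∑' n, a n = (1 - c)⁻¹ * ∑ n ∈ Finset.range m, a n := by
        rw [htsum, ← hmul, hgeo, hfin]
    _ = _ := by rw [hinv]
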